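/- Let Q be a rack and C an R-clique of Q. Then the subrack ⟨C⟩ generated by C is also an R-clique of Q. -/
import Mathlib


/-- A (right) rack: a set with a binary operation `mul` such that every right
translation `R_x : y ↦ y * x` is a bijection (with inverse given by the right
division `div`), satisfying right self-distributivity. -/
class RightRack (Q : Type*) where
  mul : Q → Q → Q
  div : Q → Q → Q
  div_mul : ∀ x y : Q, mul (div x y) y = x
  mul_div : ∀ x y : Q, div (mul x y) y = x
  self_distrib : ∀ x y z : Q, mul (mul x y) z = mul (mul x z) (mul y z)

namespace RightRack

/-- The right translation `R_x` as a permutation of `Q`. -/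
def rt {Q : Type*} [RightRack Q] (x : Q) : Equiv.Perm Q where
  toFun y := mul y x
  invFun y := div y x
  left_inv y := mul_div y x
  right_inv y := div_mul y x

/-- The right multiplication group `Rmlt(Q)`: the subgroup of the symmetric group
on `Q` generated by all right translations. -/
def rmlt (Q : Type*) [RightRack Q] : Subgroup (Equiv.Perm Q) :=
  Subgroup.closure (Set.range (rt : Q → Equiv.Perm Q))

end RightRack

/-- A quandle: an idempotent rack. -/
class RightQuandle (Q : Type*) extends RightRack Q where
  idem : ∀ x : Q, mul x x = x

/-- The R-commuting relation: `a ∼ b` iff `R_a ∘ R_b = R_b ∘ R_a`. -/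
def rsim {Q : Type*} [RightRack Q] (a b : Q) : Prop :=
  ∀ y : Q, RightRack.mul (RightRack.mul y b) a = RightRack.mul (RightRack.mul y a) b

/-- The subrack `⟨A⟩` generated by a subset `A` of a rack: the smallest subset of
`Q` containing `A` and closed under both `*` and `/`. -/
def subrackClosure {Q : Type*} [RightRack Q] (A : Set Q) : Set Q :=
  ⋂₀ {S : Set Q | A ⊆ S ∧ (∀ x ∈ S, ∀ y ∈ S, RightRack.mul x y ∈ S) ∧
      (∀ x ∈ S, ∀ y ∈ S, RightRack.div x y ∈ S)}

section Aux

open RightRack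

variable {Q : Type*} [RightRack Q]

lemma rsim_symm {a b : Q} (h : rsim a b) : rsim b a := fun y => (h y).symm

lemma div_swap_of_rsim {b c : Q} (h : rsim b c) (y : Q) :
    RightRack.div (mul y c) b = mul (div y b) c := by
  have : mul (mul (div y b) c) b = mul y c := by
    rw [h (div y b), RightRack.div_mul]
  rw [← this, RightRack.mul_div]

lemma mul_rt (y a b : Q) : mul y (mul a b) = mul (mul (div y b) a) b := by
  rw [self_distrib, RightRack.div_mul]

lemma rsim_mul {a b c : Q} (hac : rsim a c) (hbc : rsim b c) : rsim (mul a b) c := by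
  intro y
  rw [mul_rt (mul y c) a b, mul_rt y a b, div_swap_of_rsim hbc, hac (div y b), hbc]

lemma div_rt (y a b : Q) : mul y (div a b) = div (mul (mul y b) a) b := by
  have : mul (mul y (div a b)) b = mul (mul y b) a := by
    rw [self_distrib, RightRack.div_mul]
  rw [← this, RightRack.mul_div]

lemma rsim_div {a b c : Q} (hac : rsim a c) (hbc : rsim b c) : rsim (div a b) c := by
  intro y
  rw [div_rt (mul y c) a b, div_rt y a b, hbc y, hac (mul y b),
    div_swap_of_rsim hbc]

lemma subrackClosure_induction {C : Set Q} {S : Set Q} (hCS : C ⊆ S)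
    (hmul : ∀ x ∈ S, ∀ y ∈ S, mul x y ∈ S)
    (hdiv : ∀ x ∈ S, ∀ y ∈ S, div x y ∈ S) :
    subrackClosure C ⊆ S :=
  Set.sInter_subset_of_mem ⟨hCS, hmul, hdiv⟩

lemma rsim_closure_of_fixed {C : Set Q} {c : Q} (h : ∀ a ∈ C, rsim a c) :
    ∀ a ∈ subrackClosure C, rsim a c := by
  have := subrackClosure_induction (S := {a : Q | rsim a c}) h
    (fun x hx y hy => rsim_mul hx hy) (fun x hx y hy => rsim_div hx hy)
  exact fun a ha => this ha

end Aux

/-- Let `Q` be a rack and `C` an R-clique of `Q` (all elements pairwise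
R-commute). Then the subrack `⟨C⟩` generated by `C` is also an R-clique of `Q`. -/
theorem subrackClosure_of_rclique_is_rclique {Q : Type*} [RightRack Q] (C : Set Q)
    (hC : ∀ a ∈ C, ∀ b ∈ C, rsim a b) :
    ∀ a ∈ subrackClosure C, ∀ b ∈ subrackClosure C, rsim a b := by
  intro a ha b hb
  have key : subrackClosure C ⊆ {b : Q | ∀ a ∈ subrackClosure C, rsim a b} := by
    apply subrackClosure_induction
    · intro b hbC a haCl
      exact rsim_closure_of_fixed (fun c hc => hC c hc b hbC) a haCl
    · intro x hx y hy a haCl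
      exact rsim_symm (rsim_mul (rsim_symm (hx a haCl)) (rsim_symm (hy a haCl)))
    · intro x hx y hy a haCl
      exact rsim_symm (rsim_div (rsim_symm (hx a haCl)) (rsim_symm (hy a haCl)))
  exact key hb a ha
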